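/- Let $\hat\Sigma$ be positive definite, $\hat b\neq 0$, $\hat\lambda\in(0,1)$, and $V_0 = \hat\Sigma - \frac{\hat\lambda}{\hat b^t\hat\Sigma\hat b}\hat\Sigma \hat b \hat b^t \hat\Sigma$. Define $\alpha = \frac{\hat\lambda}{(1-\hat\lambda)^2\,\hat b^t\hat\Sigma\hat b}$. Then $V_0 + \alpha\, V_0 \hat b \hat b^t V_0 = \hat\Sigma$, i.e. $V_0$ satisfies the likelihood fixed-point equation $\hat\Sigma = V + (\hat c^t W \hat c)\, V \hat b \hat b^t V$ with $\hat c^t W \hat c = \alpha$. -/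

import Mathlib

open Matrix

theorem stmt_6 (p : ℕ) (Sig : Matrix (Fin p) (Fin p) ℝ) (hSig : Sig.PosDef)
    (b : Fin p → ℝ) (hb : b ≠ 0) (lam : ℝ) (hlam : 0 < lam ∧ lam < 1)
    (V₀ : Matrix (Fin p) (Fin p) ℝ)
    (hV₀ : V₀ = Sig - (lam / (b ⬝ᵥ Sig.mulVec b)) •
      Matrix.vecMulVec (Sig.mulVec b) (Sig.mulVec b))
    (α : ℝ) (hα : α = lam / ((1 - lam) ^ 2 * (b ⬝ᵥ Sig.mulVec b))) :
    V₀ + α • Matrix.vecMulVec (V₀.mulVec b) (V₀.mulVec b) = Sig := by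
  set u : Fin p → ℝ := Sig.mulVec b with hu
  have hs : 0 < b ⬝ᵥ u := by
    have := hSig.dotProduct_mulVec_pos hb
    simpa using this
  set s : ℝ := b ⬝ᵥ u with hsdef
  have hsne : s ≠ 0 := ne_of_gt hs
  have hmv : (Matrix.vecMulVec u u).mulVec b = s • u := by
    ext i
    simp only [mulVec, vecMulVec_apply, dotProduct, Pi.smul_apply, smul_eq_mul, hsdef]
    rw [Finset.sum_mul]
    exact Finset.sum_congr rfl (fun j _ => by ring)
  have hVb : V₀.mulVec b = (1 - lam) • u := by
    rw [hV₀, sub_mulVec, smul_mulVec, hmv, smul_smul,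
      div_mul_cancel₀ _ hsne]
    ext i
    show u i - lam * u i = ((1 - lam) • u) i
    simp [sub_smul]
    ring
  have hvv : Matrix.vecMulVec ((1 - lam) • u) ((1 - lam) • u)
      = ((1 - lam) * (1 - lam)) • Matrix.vecMulVec u u := by
    ext i j
    simp [vecMulVec_apply]
    ring
  have h1 : (1 - lam : ℝ) ≠ 0 := by linarith [hlam.2]
  have hαs : α * ((1 - lam) * (1 - lam)) = lam / s := by
    rw [hα]
    field_simp
  rw [hVb, hvv, smul_smul, hαs, hV₀]
  abel
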